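/- arXiv:1706.05495 — 4 statements merged into one kernel-verified Lean document; each statement's English description precedes it below -/
import Mathlib

section
/- Let n ≥ 1, let a = (a_1, ..., a_n)' and σ = (σ_1, ..., σ_n)' be vectors in ℝ^n with associated monic polynomials a(z) = z^n + a_1 z^{n-1} + ... + a_n and σ(z) = z^n + σ_1 z^{n-1} + ... + σ_n, set h = (1, 0, ..., 0)' ∈ ℝ^n, F = J − a h', Γ = J − σ h'. Let P ∈ ℝ^{n×n} be symmetric with h'Ph < 1, set ρ = √(1 − h'Ph), and let g ∈ ℝ^n and k = ρ^{-1}(g − FPh). If the identity σ(z)/a(z) = 1 + h'(zI − F)^{-1} (ρ^{-1} k) holds in the field of real rational functions, then k = ρ(σ − a) and g = ΓPh + σ − a. -/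
open Polynomial Matrix

/-- The monic polynomial `z^n + v 0 * z^(n-1) + ... + v (n-1)`. -/
noncomputable def monicPoly (n : ℕ) (v : Fin n → ℝ) : Polynomial ℝ :=
  Polynomial.X ^ n + ∑ i : Fin n, Polynomial.C (v i) * Polynomial.X ^ (n - 1 - i.val)

/-- A Schur polynomial: all complex roots in the open unit disc. -/
def IsSchur (n : ℕ) (v : Fin n → ℝ) : Prop :=
  ∀ z : ℂ, Polynomial.aeval z (monicPoly n v) = 0 → ‖z‖ < 1

/-- The Toeplitz matrix with entries `c |i-j|`. -/
def toeplitzMat (n : ℕ) (c : Fin (n + 1) → ℝ) : Matrix (Fin (n + 1)) (Fin (n + 1)) ℝ :=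
  Matrix.of fun i j => c ⟨Nat.dist i.val j.val, by
    have hi := i.isLt; have hj := j.isLt
    simp only [Nat.dist]; omega⟩

/-- A positive covariance sequence: the associated Toeplitz matrix is positive definite. -/
def IsPosCovSeq (n : ℕ) (c : Fin (n + 1) → ℝ) : Prop := (toeplitzMat n c).PosDef

/-- `w = ρ σ / a` is a shaping filter for `(c_0, ..., c_n)`:
for each `k = 0,...,n`, `(1/2π) ∫_0^{2π} e^{-ikθ} ρ² |σ(e^{iθ})|²/|a(e^{iθ})|² dθ = c_k`. -/
def IsShapingFilter (n : ℕ) (ρ : ℝ) (σv av : Fin n → ℝ) (c : Fin (n + 1) → ℝ) : Prop :=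
  ∀ k : Fin (n + 1),
    (1 / (2 * Real.pi) : ℂ) *
      ∫ θ in (0:ℝ)..(2 * Real.pi),
        Complex.exp (-(Complex.I * (k.val : ℂ) * (θ : ℂ))) *
          ((ρ : ℂ) ^ 2 *
            ((‖Polynomial.aeval (Complex.exp (Complex.I * (θ : ℂ))) (monicPoly n σv)‖ : ℝ) : ℂ) ^ 2 /
            ((‖Polynomial.aeval (Complex.exp (Complex.I * (θ : ℂ))) (monicPoly n av)‖ : ℝ) : ℂ) ^ 2)
      = ((c k : ℝ) : ℂ)
/-- The vector `h = (1, 0, ..., 0)'`. -/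
def hvec (n : ℕ) : Fin n → ℝ := fun i => if i.val = 0 then 1 else 0

/-- The upward shift matrix `J`. -/
def Jmat (n : ℕ) : Matrix (Fin n) (Fin n) ℝ :=
  Matrix.of fun i j => if j.val = i.val + 1 then 1 else 0

/-- `Γ = J - σ h'`. -/
def GammaMat (n : ℕ) (σv : Fin n → ℝ) : Matrix (Fin n) (Fin n) ℝ :=
  Jmat n - Matrix.vecMulVec σv (hvec n)

/-- The coefficients `u_1, u_2, ...` are defined by the formal power series identity
`(1 + c_1 X + ... + c_n X^n)(1 - u_1 X - u_2 X² - ...) = 1`. -/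
def uSeriesEq (n : ℕ) (c : Fin (n + 1) → ℝ) (u : ℕ → ℝ) : Prop :=
  (PowerSeries.mk fun k => if k = 0 then 1
    else if hk : k ≤ n then c ⟨k, Nat.lt_succ_of_le hk⟩ else 0) *
  (PowerSeries.mk fun k => if k = 0 then 1 else -u k) = 1

/-- The vector `u = (u_1, ..., u_n)'`. -/
def uvec (n : ℕ) (u : ℕ → ℝ) : Fin n → ℝ := fun i => u (i.val + 1)

/-- The lower-triangular Toeplitz matrix `U` with first column `(0, u_1, ..., u_{n-1})'`. -/
def Umat (n : ℕ) (u : ℕ → ℝ) : Matrix (Fin n) (Fin n) ℝ :=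
  Matrix.of fun i j => if j.val < i.val then u (i.val - j.val) else 0

/-- `g(P) = u + Uσ + UΓPh`. -/
def gCEE (n : ℕ) (u : ℕ → ℝ) (σv : Fin n → ℝ) (P : Matrix (Fin n) (Fin n) ℝ) : Fin n → ℝ :=
  uvec n u + (Umat n u).mulVec σv +
    (Umat n u).mulVec ((GammaMat n σv).mulVec (P.mulVec (hvec n)))

/-- The Covariance Extension Equation `P = Γ(P - P h h' P)Γ' + g(P) g(P)'`. -/
def CEE (n : ℕ) (u : ℕ → ℝ) (σv : Fin n → ℝ) (P : Matrix (Fin n) (Fin n) ℝ) : Prop :=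
  P = GammaMat n σv * (P - P * Matrix.vecMulVec (hvec n) (hvec n) * P) * (GammaMat n σv)ᵀ +
      Matrix.vecMulVec (gCEE n u σv P) (gCEE n u σv P)
/-- The matrix `zI - F` over the field `ℝ(z)` of real rational functions. -/
noncomputable def zIF (n : ℕ) (F : Matrix (Fin n) (Fin n) ℝ) :
    Matrix (Fin n) (Fin n) (RatFunc ℝ) :=
  Matrix.diagonal (fun _ => RatFunc.X) - F.map (algebraMap ℝ (RatFunc ℝ))
-- zIF is the image of the characteristic matrix
lemma zIF_eq_charmatrix_map (n : ℕ) (F : Matrix (Fin n) (Fin n) ℝ) :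
    zIF n F = (Matrix.charmatrix F).map (algebraMap (Polynomial ℝ) (RatFunc ℝ)) := by
  ext i j
  simp [zIF, Matrix.charmatrix_apply, Matrix.diagonal, RatFunc.algebraMap_C,
    ← IsScalarTower.algebraMap_apply, apply_ite (algebraMap (Polynomial ℝ) (RatFunc ℝ))]

lemma det_zIF_ne_zero (n : ℕ) (F : Matrix (Fin n) (Fin n) ℝ) : (zIF n F).det ≠ 0 := by
  rw [zIF_eq_charmatrix_map]
  rw [show (Matrix.charmatrix F).map (algebraMap (Polynomial ℝ) (RatFunc ℝ)) =
      (algebraMap (Polynomial ℝ) (RatFunc ℝ)).mapMatrix (Matrix.charmatrix F) from rfl,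
    ← RingHom.map_det]
  exact RatFunc.algebraMap_ne_zero (F.charpoly_monic.ne_zero)

-- the key polynomial identity
lemma key_poly (n : ℕ) (hn : 1 ≤ n) (a : Fin n → ℝ) (j : Fin n) :
    ∑ i : Fin n, Polynomial.X ^ (n - 1 - i.val) *
        (Matrix.charmatrix (Jmat n - Matrix.vecMulVec a (hvec n))) i j
      = if j.val = 0 then monicPoly n a else 0 := by
  by_cases hj : j.val = 0
  · have hterm : ∀ i : Fin n, Polynomial.X ^ (n - 1 - i.val) *
        (Matrix.charmatrix (Jmat n - Matrix.vecMulVec a (hvec n))) i j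
        = (if i = j then Polynomial.X ^ (n - 1 - i.val) * Polynomial.X else 0)
          + Polynomial.C (a i) * Polynomial.X ^ (n - 1 - i.val) := by
      intro i
      rw [Matrix.charmatrix_apply]
      have hF : (Jmat n - Matrix.vecMulVec a (hvec n)) i j = - a i := by
        simp [Jmat, Matrix.vecMulVec, hvec, Matrix.sub_apply, hj]
      rw [hF]
      simp only [Matrix.diagonal, Matrix.of_apply]
      split_ifs with h
      · subst h; simp only [map_neg, sub_neg_eq_add, mul_add]; ring
      · simp only [map_neg, sub_neg_eq_add, zero_add]; ring
    rw [Finset.sum_congr rfl (fun i _ => hterm i), Finset.sum_add_distrib,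
      Finset.sum_ite_eq' Finset.univ j, if_pos (Finset.mem_univ j), if_pos hj]
    have h1 : n - 1 - j.val = n - 1 := by omega
    rw [h1, ← pow_succ, show n - 1 + 1 = n by omega, monicPoly]
  · obtain ⟨t, ht⟩ : ∃ t, j.val = t + 1 := ⟨j.val - 1, by omega⟩
    have htn : t < n := by have := j.isLt; omega
    have hterm : ∀ i : Fin n, Polynomial.X ^ (n - 1 - i.val) *
        (Matrix.charmatrix (Jmat n - Matrix.vecMulVec a (hvec n))) i j
        = (if i = j then Polynomial.X ^ (n - 1 - i.val) * Polynomial.X else 0)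
          - (if i = (⟨t, htn⟩ : Fin n) then Polynomial.X ^ (n - 1 - i.val) else 0) := by
      intro i
      rw [Matrix.charmatrix_apply]
      have hF : (Jmat n - Matrix.vecMulVec a (hvec n)) i j
          = if i = (⟨t, htn⟩ : Fin n) then 1 else 0 := by
        rcases eq_or_ne i (⟨t, htn⟩ : Fin n) with h | h
        · subst h; simp [Jmat, Matrix.vecMulVec, hvec, ht, hj]
        · have h2 : ¬ (j.val = i.val + 1) := fun hc =>
            h (Fin.ext (show i.val = t by omega))
          simp [Jmat, Matrix.vecMulVec, hvec, hj, h2, h]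
      rw [hF]
      simp only [Matrix.diagonal, Matrix.of_apply]
      split_ifs with h1 h2
      · exfalso; subst h1; subst h2; simp at ht
      · simp only [map_zero, sub_zero]; try ring
      · simp only [Polynomial.C_1, zero_sub]; try ring
      · simp only [map_zero, sub_zero, mul_zero]
    rw [Finset.sum_congr rfl (fun i _ => hterm i), Finset.sum_sub_distrib,
      Finset.sum_ite_eq' Finset.univ j, Finset.sum_ite_eq' Finset.univ (⟨t, htn⟩ : Fin n),
      if_pos (Finset.mem_univ _), if_pos (Finset.mem_univ _), if_neg hj]
    have h1 : n - 1 - j.val + 1 = n - 1 - t := by omega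
    rw [← pow_succ, h1, sub_self]

lemma monicPoly_ne_zero (n : ℕ) (hn : 1 ≤ n) (v : Fin n → ℝ) : monicPoly n v ≠ 0 := by
  have hc : (monicPoly n v).coeff n = 1 := by
    rw [monicPoly, Polynomial.coeff_add, Polynomial.coeff_X_pow, if_pos rfl,
      Polynomial.finset_sum_coeff]
    have h0 : ∀ i ∈ Finset.univ, (Polynomial.C (v i) * Polynomial.X ^ (n - 1 - i.val)).coeff n
        = 0 := fun i _ => by
      rw [Polynomial.coeff_C_mul, Polynomial.coeff_X_pow, if_neg (by omega), mul_zero]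
    rw [Finset.sum_congr rfl h0, Finset.sum_const_zero, add_zero]
  intro h
  rw [h, Polynomial.coeff_zero] at hc
  norm_num at hc

lemma coeff_sum_aux (n : ℕ) (c : Fin n → ℝ) (t : Fin n) :
    (∑ i : Fin n, Polynomial.C (c i) * Polynomial.X ^ (n - 1 - i.val)).coeff (n - 1 - t.val)
      = c t := by
  rw [Polynomial.finset_sum_coeff, Finset.sum_eq_single t]
  · rw [Polynomial.coeff_C_mul, Polynomial.coeff_X_pow, if_pos rfl, mul_one]
  · intro i _ hne
    rw [Polynomial.coeff_C_mul, Polynomial.coeff_X_pow, if_neg, mul_zero]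
    intro hc
    exact hne (Fin.ext (by have := i.isLt; have := t.isLt; omega))
  · intro h; exact absurd (Finset.mem_univ t) h

/-- With `F = J - a h'`, `Γ = J - σ h'`, `P` symmetric with `h'Ph < 1`,
`ρ = √(1 - h'Ph)` and `k = ρ⁻¹(g - FPh)`, if `σ(z)/a(z) = 1 + h'(zI - F)⁻¹(ρ⁻¹k)` in `ℝ(z)`,
then `k = ρ(σ - a)` and `g = ΓPh + σ - a`. -/
theorem stmt10 (n : ℕ) (hn : 1 ≤ n) (a σv g : Fin n → ℝ)
    (P : Matrix (Fin n) (Fin n) ℝ) (hPsymm : P.IsSymm)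
    (hPh : hvec n ⬝ᵥ P.mulVec (hvec n) < 1)
    (ρ : ℝ) (hρ : ρ = Real.sqrt (1 - hvec n ⬝ᵥ P.mulVec (hvec n)))
    (k : Fin n → ℝ)
    (hk : k = ρ⁻¹ • (g - (Jmat n - Matrix.vecMulVec a (hvec n)).mulVec (P.mulVec (hvec n))))
    (hid : algebraMap (Polynomial ℝ) (RatFunc ℝ) (monicPoly n σv) /
        algebraMap (Polynomial ℝ) (RatFunc ℝ) (monicPoly n a) =
      1 + ((fun i => algebraMap ℝ (RatFunc ℝ) (hvec n i)) ⬝ᵥ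
        (zIF n (Jmat n - Matrix.vecMulVec a (hvec n)))⁻¹.mulVec
          (fun i => algebraMap ℝ (RatFunc ℝ) ((ρ⁻¹ • k) i)))) :
    k = ρ • (σv - a) ∧ g = (GammaMat n σv).mulVec (P.mulVec (hvec n)) + σv - a := by
  set β : ℝ := hvec n ⬝ᵥ P.mulVec (hvec n) with hβ
  set F : Matrix (Fin n) (Fin n) ℝ := Jmat n - Matrix.vecMulVec a (hvec n) with hF
  set f := algebraMap (Polynomial ℝ) (RatFunc ℝ) with hf
  set A := f (monicPoly n a) with hAdef
  have hA : A ≠ 0 := RatFunc.algebraMap_ne_zero (monicPoly_ne_zero n hn a)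
  set v : Fin n → RatFunc ℝ := fun j => f (Polynomial.X ^ (n - 1 - j.val)) * A⁻¹ with hvdef
  -- step 1: the row vector v is h'(zI-F)⁻¹
  have hv : Matrix.vecMul v (zIF n F) = fun j => algebraMap ℝ (RatFunc ℝ) (hvec n j) := by
    funext j
    rw [zIF_eq_charmatrix_map]
    have : Matrix.vecMul v ((Matrix.charmatrix F).map f) j
        = ∑ i : Fin n, v i * f ((Matrix.charmatrix F) i j) := by
      simp [Matrix.vecMul, dotProduct, Matrix.map_apply]
    rw [this]
    have h2 : ∑ i : Fin n, v i * f ((Matrix.charmatrix F) i j)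
        = (∑ i : Fin n, f (Polynomial.X ^ (n - 1 - i.val) * (Matrix.charmatrix F) i j)) * A⁻¹ := by
      rw [Finset.sum_mul]
      exact Finset.sum_congr rfl fun i _ => by rw [_root_.map_mul]; ring
    rw [h2, ← map_sum f, key_poly n hn a j]
    by_cases hj : j.val = 0
    · rw [if_pos hj, ← hAdef, mul_inv_cancel₀ hA]
      simp [hvec, hj]
    · rw [if_neg hj]
      simp [hvec, hj]
  have hMdet : IsUnit (zIF n F).det := (det_zIF_ne_zero n F).isUnit
  have hvv : Matrix.vecMul (fun i => algebraMap ℝ (RatFunc ℝ) (hvec n i)) (zIF n F)⁻¹ = v := by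
    rw [← hv, Matrix.vecMul_vecMul, Matrix.mul_nonsing_inv _ hMdet, Matrix.vecMul_one]
  rw [Matrix.dotProduct_mulVec, hvv] at hid
  -- step 2: extract the polynomial identity
  set q : Fin n → ℝ := ρ⁻¹ • k with hqdef
  have hdot : v ⬝ᵥ (fun i => algebraMap ℝ (RatFunc ℝ) (q i))
      = f (∑ i : Fin n, Polynomial.C (q i) * Polynomial.X ^ (n - 1 - i.val)) * A⁻¹ := by
    rw [map_sum, Finset.sum_mul]
    refine Finset.sum_congr rfl fun i _ => ?_
    show v i * (algebraMap ℝ (RatFunc ℝ)) (q i) = _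
    rw [_root_.map_mul,
      IsScalarTower.algebraMap_apply ℝ (Polynomial ℝ) (RatFunc ℝ) (q i),
      Polynomial.algebraMap_eq]
    simp only [hvdef]
    ring
  rw [hdot] at hid
  set T : Polynomial ℝ := ∑ i : Fin n, Polynomial.C (q i) * Polynomial.X ^ (n - 1 - i.val)
    with hTdef
  have hpoly : monicPoly n σv = monicPoly n a + T := by
    apply RatFunc.algebraMap_injective
    rw [map_add]
    rw [div_eq_iff hA] at hid
    rw [hid]
    field_simp
    rfl
  have hq : ∀ t : Fin n, q t = σv t - a t := by
    intro t
    have h3 : (∑ i : Fin n, Polynomial.C (σv i) * Polynomial.X ^ (n - 1 - i.val))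
        = (∑ i : Fin n, Polynomial.C (a i) * Polynomial.X ^ (n - 1 - i.val)) + T := by
      have := hpoly
      rw [monicPoly, monicPoly] at this
      linear_combination (norm := abel) this
    have h4 := congrArg (fun p => Polynomial.coeff p (n - 1 - t.val)) h3
    simp only [hTdef, Polynomial.coeff_add, coeff_sum_aux] at h4
    linarith
  -- step 3: real arithmetic
  have hρpos : 0 < ρ := by rw [hρ]; exact Real.sqrt_pos.mpr (by linarith)
  have hρ2 : ρ ^ 2 = 1 - β := by
    rw [hρ]; rw [Real.sq_sqrt (by linarith)]
  have hρne : ρ ≠ 0 := ne_of_gt hρpos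
  have hkq : ∀ i, k i = ρ * (σv i - a i) := by
    intro i
    have hqi : ρ⁻¹ * k i = σv i - a i := by
      have := hq i; simpa [hqdef] using this
    have h7 : ρ * (ρ⁻¹ * k i) = ρ * (σv i - a i) := by rw [hqi]
    rwa [← mul_assoc, mul_inv_cancel₀ hρne, one_mul] at h7
  constructor
  · funext i
    simp only [Pi.smul_apply, Pi.sub_apply, smul_eq_mul]
    exact hkq i
  · -- g = ρ • k + F.mulVec (P.mulVec h)
    have hg : ∀ i, g i = ρ * k i + F.mulVec (P.mulVec (hvec n)) i := by
      intro i
      have h8 : k i = ρ⁻¹ * (g i - F.mulVec (P.mulVec (hvec n)) i) := by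
        have := congrFun hk i
        simpa using this
      have h9 : ρ * k i = ρ * (ρ⁻¹ * (g i - F.mulVec (P.mulVec (hvec n)) i)) := by rw [h8]
      rw [← mul_assoc, mul_inv_cancel₀ hρne, one_mul] at h9
      linarith
    have hrank1 : ∀ (w : Fin n → ℝ) (c : Fin n → ℝ) (i : Fin n),
        (Matrix.vecMulVec c (hvec n)).mulVec w i = c i * (hvec n ⬝ᵥ w) := by
      intro w c i
      simp [Matrix.mulVec, Matrix.vecMulVec, dotProduct, Finset.mul_sum, mul_assoc]
    funext i
    have hFv : F.mulVec (P.mulVec (hvec n)) i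
        = (Jmat n).mulVec (P.mulVec (hvec n)) i - a i * β := by
      rw [hF, Matrix.sub_mulVec]
      simp only [Pi.sub_apply]
      rw [hrank1]
    have hGv : (GammaMat n σv).mulVec (P.mulVec (hvec n)) i
        = (Jmat n).mulVec (P.mulVec (hvec n)) i - σv i * β := by
      rw [GammaMat, Matrix.sub_mulVec]
      simp only [Pi.sub_apply]
      rw [hrank1]
    have hgi := hg i
    rw [hFv, hkq i] at hgi
    simp only [Pi.add_apply, Pi.sub_apply, hGv]
    linear_combination hgi + (σv i - a i) * hρ2
end

section
/- Let n ≥ 1, let P ∈ ℝ^{n×n} be symmetric, g ∈ ℝ^n, h = (1, 0, ..., 0)' ∈ ℝ^n, and F ∈ ℝ^{n×n}, and assume ρ² := 1 − h'Ph > 0. Set ρ = √(1 − h'Ph), k = ρ^{-1}(g − FPh), and Γ = F − ρ^{-1} k h'. If P satisfies the algebraic Riccati equation P = FPF' + (g − FPh)(1 − h'Ph)^{-1}(g − FPh)', then P also satisfies P = Γ(P − P h h' P)Γ' + g g'. -/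
open Matrix

variable {n : ℕ}

lemma my_mul_vmv (A : Matrix (Fin n) (Fin n) ℝ) (u v : Fin n → ℝ) :
    A * vecMulVec u v = vecMulVec (A *ᵥ u) v := by
  ext i j
  simp [Matrix.mul_apply, vecMulVec_apply, Matrix.mulVec, dotProduct,
    Finset.sum_mul, mul_assoc]

lemma my_vmv_mul (A : Matrix (Fin n) (Fin n) ℝ) (u v : Fin n → ℝ) :
    vecMulVec u v * A = vecMulVec u (Aᵀ *ᵥ v) := by
  ext i j
  simp [Matrix.mul_apply, vecMulVec_apply, Matrix.mulVec, dotProduct,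
    Finset.mul_sum, Matrix.transpose_apply]
  ring_nf
  congr 1; ext x; ring

lemma my_vmv_mul_vmv (u v w z : Fin n → ℝ) :
    vecMulVec u v * vecMulVec w z = (v ⬝ᵥ w) • vecMulVec u z := by
  ext i j
  simp [Matrix.mul_apply, vecMulVec_apply, dotProduct, Finset.sum_mul, Finset.mul_sum]
  ring_nf
  congr 1; ext x; ring

lemma my_smul_vmv (c : ℝ) (u v : Fin n → ℝ) :
    vecMulVec (c • u) v = c • vecMulVec u v := by
  ext i j; simp [vecMulVec_apply, mul_assoc]

lemma my_vmv_transpose (u v : Fin n → ℝ) :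
    (vecMulVec u v)ᵀ = vecMulVec v u := by
  ext i j; simp [vecMulVec_apply, Matrix.transpose_apply]; ring

lemma my_vmv_mulVec (u v w : Fin n → ℝ) :
    vecMulVec u v *ᵥ w = (v ⬝ᵥ w) • u := by
  ext i
  simp [vecMulVec_apply, Matrix.mulVec, dotProduct, Finset.sum_mul, Finset.mul_sum]
  ring_nf

lemma my_vmv_smul (c : ℝ) (u v : Fin n → ℝ) :
    vecMulVec u (c • v) = c • vecMulVec u v := by
  ext i j; simp [vecMulVec_apply]; ring

lemma my_add_vmv (u w v : Fin n → ℝ) :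
    vecMulVec (u + w) v = vecMulVec u v + vecMulVec w v := by
  ext i j; simp [vecMulVec_apply]; ring

lemma my_vmv_add (u v w : Fin n → ℝ) :
    vecMulVec u (v + w) = vecMulVec u v + vecMulVec u w := by
  ext i j; simp [vecMulVec_apply]; ring

/-- If `P` is symmetric with `1 - h'Ph > 0` and satisfies the algebraic
Riccati equation `P = FPF' + (g - FPh)(1 - h'Ph)⁻¹(g - FPh)'`, then with
`ρ = √(1 - h'Ph)`, `k = ρ⁻¹(g - FPh)` and `Γ = F - ρ⁻¹ k h'`, `P` also satisfies
`P = Γ(P - P h h' P)Γ' + g g'`. -/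
theorem stmt11 (n : ℕ) (hn : 1 ≤ n)
    (P F : Matrix (Fin n) (Fin n) ℝ) (g : Fin n → ℝ) (hPsymm : P.IsSymm)
    (hpos : 0 < 1 - hvec n ⬝ᵥ P.mulVec (hvec n))
    (ρ : ℝ) (hρ : ρ = Real.sqrt (1 - hvec n ⬝ᵥ P.mulVec (hvec n)))
    (k : Fin n → ℝ) (hk : k = ρ⁻¹ • (g - F.mulVec (P.mulVec (hvec n))))
    (Γ : Matrix (Fin n) (Fin n) ℝ) (hΓ : Γ = F - Matrix.vecMulVec (ρ⁻¹ • k) (hvec n))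
    (hric : P = F * P * Fᵀ + (1 - hvec n ⬝ᵥ P.mulVec (hvec n))⁻¹ •
      Matrix.vecMulVec (g - F.mulVec (P.mulVec (hvec n))) (g - F.mulVec (P.mulVec (hvec n)))) :
    P = Γ * (P - P * Matrix.vecMulVec (hvec n) (hvec n) * P) * Γᵀ +
        Matrix.vecMulVec g g := by
  have hPt : Pᵀ = P := hPsymm
  set h : Fin n → ℝ := hvec n with hh
  set p : Fin n → ℝ := P.mulVec h with hp
  set t : ℝ := h ⬝ᵥ p with ht
  set u : Fin n → ℝ := g - F.mulVec p with hu
  have hs : (1 : ℝ) - t ≠ 0 := ne_of_gt hpos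
  have hρ2 : ρ * ρ = 1 - t := by rw [hρ]; exact Real.mul_self_sqrt (le_of_lt hpos)
  have hck : ρ⁻¹ • k = (1 - t)⁻¹ • u := by
    rw [hk, smul_smul, ← mul_inv, hρ2]
  have hg : g = u + F.mulVec p := by simp [hu]
  have hpt : p ⬝ᵥ h = t := dotProduct_comm p h
  subst hΓ
  rw [hck]
  nth_rewrite 1 [hric]
  rw [hg]
  simp only [my_smul_vmv, mul_sub, sub_mul, Matrix.mul_smul, Matrix.smul_mul,
    my_mul_vmv, my_vmv_mul, my_vmv_mul_vmv, my_vmv_transpose, transpose_sub,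
    transpose_smul, transpose_transpose, hPt, ← Matrix.mulVec_mulVec, ← hp,
    my_add_vmv, my_vmv_add, my_vmv_mulVec, my_vmv_smul, hpt, ← ht, smul_smul]
  match_scalars <;> field_simp <;> ring
end

section
/- Let n ≥ 1, let σ(z) = z^n + σ_1 z^{n-1} + ... + σ_n and a(z) = z^n + a_1 z^{n-1} + ... + a_n be Schur polynomials, let ρ > 0, and let b(z) = z^n + b_1 z^{n-1} + ... + b_n be a monic real polynomial satisfying the identity a(z) b*(z) + b(z) a*(z) = 2ρ² σ(z) σ*(z) in ℝ[z], where p*(z) := z^n p(1/z) denotes the reversed polynomial of a polynomial p of degree n. Then b(z) is a Schur polynomial, and the rational function f = b/(2a) satisfies Re f(z) > 0 for all complex z with |z| ≥ 1; in particular f is positive real. -/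
open Polynomial Matrix

lemma mp_natDegree_le (n : ℕ) (v : Fin n → ℝ) : (monicPoly n v).natDegree ≤ n := by
  unfold monicPoly
  refine (Polynomial.natDegree_add_le _ _).trans (max_le (by simp) ?_)
  refine Polynomial.natDegree_sum_le_of_forall_le _ _ (fun i _ => ?_)
  refine (Polynomial.natDegree_mul_le).trans ?_
  simp only [Polynomial.natDegree_C, Polynomial.natDegree_X_pow, zero_add]
  omega

lemma mp_coeff_n (n : ℕ) (hn : 1 ≤ n) (v : Fin n → ℝ) : (monicPoly n v).coeff n = 1 := by
  unfold monicPoly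
  rw [Polynomial.coeff_add, Polynomial.finset_sum_coeff]
  rw [Polynomial.coeff_X_pow, if_pos rfl]
  have : ∀ i : Fin n, (Polynomial.C (v i) * Polynomial.X ^ (n - 1 - i.val)).coeff n = 0 := by
    intro i
    rw [Polynomial.coeff_C_mul, Polynomial.coeff_X_pow, if_neg (by omega), mul_zero]
  rw [Finset.sum_congr rfl (fun i _ => this i), Finset.sum_const, smul_zero, add_zero]

lemma reflect_eval_key (n : ℕ) (p : Polynomial ℝ) (hd : p.natDegree ≤ n) (z : ℂ) (hz : z ≠ 0) :
    Polynomial.aeval z⁻¹ (Polynomial.reflect n p) * z ^ n = Polynomial.aeval z p := by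
  letI := invertibleOfNonzero hz
  have h := Polynomial.eval₂_reflect_mul_pow (algebraMap ℝ ℂ) z n p hd
  rw [invOf_eq_inv] at h
  simpa [Polynomial.aeval_def] using h

lemma schur_ne (n : ℕ) (v : Fin n → ℝ) (hv : IsSchur n v) (z : ℂ) (hz : 1 ≤ ‖z‖) :
    Polynomial.aeval z (monicPoly n v) ≠ 0 := fun h => absurd (hv z h) (not_lt.2 hz)

lemma reflect_ne (n : ℕ) (hn : 1 ≤ n) (v : Fin n → ℝ) (hv : IsSchur n v)
    (w : ℂ) (hw : ‖w‖ ≤ 1) :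
    Polynomial.aeval w (Polynomial.reflect n (monicPoly n v)) ≠ 0 := by
  rcases eq_or_ne w 0 with rfl | hw0
  · rw [Polynomial.aeval_def, Polynomial.eval₂_at_zero, Polynomial.coeff_reflect,
      Polynomial.revAt_le (Nat.zero_le n), Nat.sub_zero, mp_coeff_n n hn v]
    simp
  · intro h
    have key := reflect_eval_key n _ (mp_natDegree_le n v) w⁻¹ (inv_ne_zero hw0)
    rw [inv_inv, h, zero_mul] at key
    have h2 := hv w⁻¹ key.symm
    rw [norm_inv] at h2
    have habs : 0 < ‖w‖ := norm_pos_iff.mpr hw0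
    nlinarith [mul_lt_mul_of_pos_right h2 habs, inv_mul_cancel₀ (ne_of_gt habs)]

/-- If `σ(z)` and `a(z)` are Schur, `ρ > 0`, and the monic polynomial `b(z)`
satisfies `a(z)b*(z) + b(z)a*(z) = 2ρ² σ(z)σ*(z)` in `ℝ[z]` (where `p*(z) = zⁿ p(1/z)` is the
reversed polynomial), then `b(z)` is Schur and `f = b/(2a)` satisfies `Re f(z) > 0` for all
`|z| ≥ 1`; in particular `f` is positive real. -/
theorem stmt14 (n : ℕ) (hn : 1 ≤ n) (σv av bv : Fin n → ℝ)
    (hσ : IsSchur n σv) (ha : IsSchur n av) (ρ : ℝ) (hρ : 0 < ρ)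
    (hid : monicPoly n av * Polynomial.reflect n (monicPoly n bv) +
        monicPoly n bv * Polynomial.reflect n (monicPoly n av)
      = Polynomial.C (2 * ρ ^ 2) *
          (monicPoly n σv * Polynomial.reflect n (monicPoly n σv))) :
    IsSchur n bv ∧
    (∀ z : ℂ, 1 ≤ ‖z‖ →
      0 < (Polynomial.aeval z (monicPoly n bv) /
            (2 * Polynomial.aeval z (monicPoly n av))).re) ∧
    (∀ z : ℂ, 1 < ‖z‖ →
      Polynomial.aeval z (monicPoly n av) ≠ 0 ∧
      0 ≤ (Polynomial.aeval z (monicPoly n bv) /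
            (2 * Polynomial.aeval z (monicPoly n av))).re) := by
  -- mapped reflected polynomials over ℂ
  set Pa : Polynomial ℂ := (Polynomial.reflect n (monicPoly n av)).map (algebraMap ℝ ℂ) with hPa
  set Pb : Polynomial ℂ := (Polynomial.reflect n (monicPoly n bv)).map (algebraMap ℝ ℂ) with hPb
  have hevA : ∀ w : ℂ, Pa.eval w = Polynomial.aeval w (Polynomial.reflect n (monicPoly n av)) := by
    intro w; rw [hPa, Polynomial.eval_map, Polynomial.aeval_def]
  have hevB : ∀ w : ℂ, Pb.eval w = Polynomial.aeval w (Polynomial.reflect n (monicPoly n bv)) := by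
    intro w; rw [hPb, Polynomial.eval_map, Polynomial.aeval_def]
  set g : ℂ → ℂ := fun w => Pb.eval w / (2 * Pa.eval w) with hg
  -- denominator nonzero on the closed unit ball
  have hden : ∀ w : ℂ, ‖w‖ ≤ 1 → (2 : ℂ) * Pa.eval w ≠ 0 := by
    intro w hw
    exact mul_ne_zero two_ne_zero (by rw [hevA]; exact reflect_ne n hn av ha w hw)
  -- boundary positivity
  have hbd : ∀ w : ℂ, ‖w‖ = 1 → 0 < (g w).re := by
    intro w hw
    have hw0 : w ≠ 0 := by intro h; rw [h] at hw; simp at hw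
    have hwn : w ^ n ≠ 0 := pow_ne_zero _ hw0
    have hconj : (starRingEnd ℂ) w = w⁻¹ :=
      (Complex.inv_eq_conj hw).symm
    set α := Polynomial.aeval w (Polynomial.reflect n (monicPoly n av)) with hα'
    set β := Polynomial.aeval w (Polynomial.reflect n (monicPoly n bv)) with hβ'
    set s := Polynomial.aeval w (Polynomial.reflect n (monicPoly n σv)) with hs'
    have kA : (starRingEnd ℂ) α * w ^ n = Polynomial.aeval w (monicPoly n av) := by
      rw [hα', ← Polynomial.aeval_conj, hconj]
      exact reflect_eval_key n _ (mp_natDegree_le n av) w hw0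
    have kB : (starRingEnd ℂ) β * w ^ n = Polynomial.aeval w (monicPoly n bv) := by
      rw [hβ', ← Polynomial.aeval_conj, hconj]
      exact reflect_eval_key n _ (mp_natDegree_le n bv) w hw0
    have kS : (starRingEnd ℂ) s * w ^ n = Polynomial.aeval w (monicPoly n σv) := by
      rw [hs', ← Polynomial.aeval_conj, hconj]
      exact reflect_eval_key n _ (mp_natDegree_le n σv) w hw0
    have hidw := congrArg (Polynomial.aeval w) hid
    simp only [_root_.map_add, _root_.map_mul, Polynomial.aeval_C] at hidw
    rw [← kA, ← kB, ← kS, ← hα', ← hβ', ← hs'] at hidw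
    simp only [Complex.coe_algebraMap] at hidw
    push_cast at hidw
    have hc : ((starRingEnd ℂ) α * β + (starRingEnd ℂ) β * α) * w ^ n
        = ((2 * (ρ : ℂ) ^ 2) * ((starRingEnd ℂ) s * s)) * w ^ n := by
      linear_combination hidw
    have heq := mul_right_cancel₀ hwn hc
    have hre := congrArg Complex.re heq
    simp only [Complex.add_re, Complex.mul_re, Complex.mul_im, Complex.conj_re, Complex.conj_im,
      Complex.coe_algebraMap, ← Complex.ofReal_pow, Complex.ofReal_re, Complex.ofReal_im, Complex.re_ofNat,
      Complex.im_ofNat] at hre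
    have hαne : α ≠ 0 := reflect_ne n hn av ha w hw.le
    have hsne : s ≠ 0 := reflect_ne n hn σv hσ w hw.le
    have hαns : 0 < Complex.normSq α := Complex.normSq_pos.2 hαne
    have hsns : 0 < Complex.normSq s := Complex.normSq_pos.2 hsne
    have hgw : g w = β / (2 * α) := by rw [hg]; simp only [hevA, hevB, hα', hβ']
    rw [hgw, Complex.div_re]
    have h2α : 0 < Complex.normSq (2 * α) := Complex.normSq_pos.2 (by simp [hαne])
    rw [← add_div]
    apply div_pos _ h2α
    simp only [Complex.mul_re, Complex.mul_im, Complex.normSq_apply, Complex.re_ofNat,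
      Complex.im_ofNat] at *
    nlinarith [hre, mul_pos (pow_pos hρ 2) hsns]
  -- minimum on the sphere
  have hgc : ContinuousOn g (Metric.closedBall (0 : ℂ) 1) := by
    apply ContinuousOn.div (Pb.continuous.continuousOn)
      ((continuous_const.mul Pa.continuous).continuousOn)
    intro w hw
    exact hden w (by rwa [Metric.mem_closedBall, Complex.dist_eq, sub_zero] at hw)
  have hsph : Metric.sphere (0 : ℂ) 1 ⊆ Metric.closedBall (0 : ℂ) 1 := Metric.sphere_subset_closedBall
  obtain ⟨w₀, hw₀mem, hw₀min⟩ := (isCompact_sphere (0 : ℂ) 1).exists_isMinOn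
    ⟨1, by simp⟩ ((Complex.continuous_re.comp_continuousOn (hgc.mono hsph)))
  have hw₀abs : ‖w₀‖ = 1 := by
    rwa [Metric.mem_sphere, Complex.dist_eq, sub_zero] at hw₀mem
  set m := (g w₀).re with hm'
  have hm : 0 < m := hbd w₀ hw₀abs
  -- maximum modulus principle
  have hinterior : ∀ w : ℂ, ‖w‖ ≤ 1 → m ≤ (g w).re := by
    have hdc : DiffContOnCl ℂ (fun w => Complex.exp (-g w)) (Metric.ball (0 : ℂ) 1) := by
      constructor
      · apply DifferentiableOn.cexp
        apply DifferentiableOn.neg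
        apply DifferentiableOn.div (Pb.differentiable.differentiableOn)
          (((differentiable_const (2:ℂ)).mul Pa.differentiable).differentiableOn)
        intro w hw
        exact hden w (by rw [Metric.mem_ball, Complex.dist_eq, sub_zero] at hw; exact hw.le)
      · rw [closure_ball (0 : ℂ) one_ne_zero]
        exact (hgc.neg).cexp
    have hbound : ∀ w ∈ frontier (Metric.ball (0 : ℂ) 1),
        ‖Complex.exp (-g w)‖ ≤ Real.exp (-m) := by
      rw [frontier_ball (0 : ℂ) one_ne_zero]
      intro w hw
      rw [Complex.norm_exp, Complex.neg_re]
      exact Real.exp_le_exp.2 (neg_le_neg (isMinOn_iff.mp hw₀min w hw))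
    intro w hw
    have hmem : w ∈ closure (Metric.ball (0 : ℂ) 1) := by
      rw [closure_ball (0 : ℂ) one_ne_zero, Metric.mem_closedBall, Complex.dist_eq, sub_zero]
      exact hw
    have := Complex.norm_le_of_forall_mem_frontier_norm_le Metric.isBounded_ball hdc hbound hmem
    rw [Complex.norm_exp, Complex.neg_re] at this
    have := Real.exp_le_exp.1 this
    linarith
  -- transfer to |z| ≥ 1
  have hmain : ∀ z : ℂ, 1 ≤ ‖z‖ →
      0 < (Polynomial.aeval z (monicPoly n bv) /
            (2 * Polynomial.aeval z (monicPoly n av))).re := by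
    intro z hz
    have hz0 : z ≠ 0 := by
      intro h; rw [h] at hz; simp only [norm_zero] at hz; linarith
    have hzn : z ^ n ≠ 0 := pow_ne_zero _ hz0
    have hwle : ‖z⁻¹‖ ≤ 1 := by
      rw [norm_inv]
      exact inv_le_one_of_one_le₀ hz
    have kA := reflect_eval_key n _ (mp_natDegree_le n av) z hz0
    have kB := reflect_eval_key n _ (mp_natDegree_le n bv) z hz0
    have hαne : Polynomial.aeval z⁻¹ (Polynomial.reflect n (monicPoly n av)) ≠ 0 :=
      reflect_ne n hn av ha z⁻¹ hwle
    have hfg : Polynomial.aeval z (monicPoly n bv) /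
          (2 * Polynomial.aeval z (monicPoly n av)) = g z⁻¹ := by
      rw [hg]
      simp only [hevA, hevB]
      rw [← kA, ← kB]
      rw [mul_comm (Polynomial.aeval z⁻¹ (Polynomial.reflect n (monicPoly n bv))) (z ^ n),
        show (2 : ℂ) * (Polynomial.aeval z⁻¹ (Polynomial.reflect n (monicPoly n av)) * z ^ n)
          = z ^ n * (2 * Polynomial.aeval z⁻¹ (Polynomial.reflect n (monicPoly n av))) by ring,
        mul_div_mul_left _ _ hzn]
    rw [hfg]
    exact lt_of_lt_of_le hm (hinterior z⁻¹ hwle)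
  refine ⟨?_, hmain, ?_⟩
  · intro z hzero
    by_contra hcon
    push_neg at hcon
    have h0 := hmain z hcon
    rw [hzero, zero_div] at h0
    simp at h0
  · intro z hz
    exact ⟨schur_ne n av ha z hz.le, (hmain z hz.le).le⟩
end

section
/- Let n ≥ 1 and let T be an (n+1)×(n+1) complex matrix such that I + T is invertible. Define the vector u ∈ ℂ^n and the matrix U ∈ ℂ^{n×n} by [u U] = [0 I_n](I_{n+1} + T)^{-1}T, i.e., u is the first column and U the remaining n×n block of the n×(n+1) matrix obtained by deleting the first row of (I + T)^{-1}T. Let σ, a, g ∈ ℂ^n, P ∈ ℂ^{n×n}, h = (1, 0, ..., 0)' ∈ ℂ^n, and Γ = J − σ h' with J the n×n upward shift matrix. If (0, g_1, ..., g_n)' = T·(1, a_1, ..., a_n)' and g = ΓPh + σ − a, then g = u + Uσ + UΓPh and a = (I − U)(ΓPh + σ) − u. -/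
open Matrix

/-- Let `T` be an `(n+1)×(n+1)` complex matrix with `I + T` invertible, and
define `u` and `U` by `[u U] = [0 Iₙ](I + T)⁻¹T`, i.e. `u` is the first column and `U` the
remaining `n×n` block of the matrix obtained by deleting the first row of `(I + T)⁻¹T`.
If `(0, g₁, ..., gₙ)' = T(1, a₁, ..., aₙ)'` and `g = ΓPh + σ - a`, then
`g = u + Uσ + UΓPh` and `a = (I - U)(ΓPh + σ) - u`. -/
theorem stmt16 (n : ℕ) (hn : 1 ≤ n)
    (T : Matrix (Fin (n + 1)) (Fin (n + 1)) ℂ) (hT : IsUnit (1 + T))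
    (u : Fin n → ℂ) (U : Matrix (Fin n) (Fin n) ℂ)
    (hu : u = fun i => ((1 + T)⁻¹ * T) i.succ 0)
    (hU : U = Matrix.of fun i j => ((1 + T)⁻¹ * T) i.succ j.succ)
    (σv a g : Fin n → ℂ) (P : Matrix (Fin n) (Fin n) ℂ)
    (h : Fin n → ℂ) (hh : h = fun i => if i.val = 0 then 1 else 0)
    (Γ : Matrix (Fin n) (Fin n) ℂ)
    (hΓ : Γ = (Matrix.of fun i j => if j.val = i.val + 1 then 1 else 0) -
      Matrix.vecMulVec σv h)
    (h1 : (Fin.cons 0 g : Fin (n + 1) → ℂ) = T.mulVec (Fin.cons 1 a))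
    (h2 : g = Γ.mulVec (P.mulVec h) + σv - a) :
    g = u + U.mulVec σv + U.mulVec (Γ.mulVec (P.mulVec h)) ∧
    a = (1 - U).mulVec (Γ.mulVec (P.mulVec h) + σv) - u := by
  have hdet : IsUnit (1 + T).det := (Matrix.isUnit_iff_isUnit_det _).mp hT
  set M := (1 + T)⁻¹ with hM
  have hMT : M * (1 + T) = 1 := Matrix.nonsing_inv_mul _ hdet
  set w : Fin n → ℂ := Γ.mulVec (P.mulVec h) + σv with hw
  have haw : (Fin.cons 1 w : Fin (n + 1) → ℂ) = (1 + T).mulVec (Fin.cons 1 a) := by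
    funext i
    rw [Matrix.add_mulVec, Matrix.one_mulVec, ← h1]
    refine Fin.cases ?_ ?_ i
    · simp
    · intro j
      have : g j = w j - a j := by rw [h2]; simp
      simp [this]
  have hcons : M.mulVec (Fin.cons 1 w) = Fin.cons 1 a := by
    rw [haw, Matrix.mulVec_mulVec, hMT, Matrix.one_mulVec]
  have hMT' : M * T = 1 - M := by
    have h3 : M + M * T = 1 := by rw [← mul_one_add, hMT]
    rw [← h3]; abel
  have hkey : (M * T).mulVec (Fin.cons 1 w) = Fin.cons 0 g := by
    rw [hMT', Matrix.sub_mulVec, Matrix.one_mulVec, hcons]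
    funext i
    refine Fin.cases ?_ ?_ i
    · simp
    · intro j
      have : g j = w j - a j := by rw [h2]; simp
      simp [this]
  have hg : ∀ i, g i = u i + U.mulVec w i := by
    intro i
    have hki := congrFun hkey i.succ
    rw [Fin.cons_succ] at hki
    rw [← hki]
    rw [Matrix.mulVec, dotProduct, Fin.sum_univ_succ]
    simp [hu, hU, Matrix.mulVec, dotProduct]
  constructor
  · funext i
    have := hg i
    rw [this]
    simp [hw, Matrix.mulVec_add]
    ring
  · funext i
    have hgi := hg i
    have hai : a i = w i - g i := by
      have : g i = w i - a i := by rw [h2]; simp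
      rw [this]; ring
    rw [hai, hgi]
    simp [Matrix.sub_mulVec, Matrix.one_mulVec, hw]
    ring
end
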